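/- Let X be a smooth projective surface, B an effective R-divisor with (X,B) log canonical (in particular every coefficient of B is ≤ 1), and suppose −(K_X+B) is nef. If H ⊂ X is an irreducible curve with H² ≤ 0 and b = mult_H B, then (K_X+H)·H = 0 (so p_a(H) = 1), (1−b)·H² = 0, and (B − bH)·H = 0. -/
import Mathlib

/-- Let `X` be a smooth projective surface, `B` an effective
`ℝ`-divisor with `(X, B)` log canonical (so `b = mult_H B ≤ 1`), and `−(K_X+B)` nef.
If `H` is an irreducible curve with `H² ≤ 0` (and `p_a(H) ≥ 1`, i.e. `(K_X+H)·H ≥ 0`;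
the effective divisor `B − bH` has no `H`-component, so `(B − bH)·H ≥ 0`), then
`(K_X+H)·H = 0` (so `p_a(H) = 1`), `(1−b)·H² = 0` and `(B − bH)·H = 0`. -/
theorem stmt8 (V : Type*) [AddCommGroup V] [Module ℝ V]
    (inter : V →ₗ[ℝ] V →ₗ[ℝ] ℝ)
    (inter_symm : ∀ x y : V, inter x y = inter y x)
    (K B H : V) (b : ℝ)
    (hb : b ≤ 1)
    (hH2 : inter H H ≤ 0)
    (hnef : 0 ≤ inter (-(K + B)) H)
    (heff : 0 ≤ inter (B - b • H) H)
    (hpa : 0 ≤ inter (K + H) H) :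
    inter (K + H) H = 0 ∧ (1 - b) * inter H H = 0 ∧ inter (B - b • H) H = 0 := by
  simp only [map_add, map_sub, map_neg, map_smul, LinearMap.add_apply, LinearMap.sub_apply,
    LinearMap.neg_apply, LinearMap.smul_apply, smul_eq_mul] at *
  refine ⟨by nlinarith, by nlinarith, by nlinarith⟩
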